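/- Let 0 ≤ p_L ≤ p_U ≤ 1. If p_L < p_U, then inf over d ∈ (0,1) of sup over p ∈ [p_L, p_U] of (-p·log d - (1-p)·log(1-d)) is achieved at d = p_U when p_U ≤ 1/2, at d = p_L when p_L ≥ 1/2, and at d = 1/2 when p_L < 1/2 < p_U. That is, the minimax forecast under log loss coincides with the minimax forecast under quadratic loss. -/

import Mathlib

lemma aff_le_max (p pL pU A B : ℝ) (h1 : pL ≤ p) (h2 : p ≤ pU) :
    -p * A - (1 - p) * B ≤
      max (-pL * A - (1 - pL) * B) (-pU * A - (1 - pU) * B) := by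
  rcases le_total A B with h | h
  · exact le_max_of_le_right (by nlinarith)
  · exact le_max_of_le_left (by nlinarith)

lemma sup_aff (pL pU A B : ℝ) (hLU : pL ≤ pU) :
    sSup ((fun p => -p * A - (1 - p) * B) '' Set.Icc pL pU) =
      max (-pL * A - (1 - pL) * B) (-pU * A - (1 - pU) * B) := by
  have hbdd : BddAbove ((fun p => -p * A - (1 - p) * B) '' Set.Icc pL pU) := by
    refine ⟨max (-pL * A - (1 - pL) * B) (-pU * A - (1 - pU) * B), ?_⟩
    rintro x ⟨p, ⟨h1, h2⟩, rfl⟩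
    exact aff_le_max p pL pU A B h1 h2
  apply le_antisymm
  · apply csSup_le ((Set.nonempty_Icc.2 hLU).image _)
    rintro x ⟨p, ⟨h1, h2⟩, rfl⟩
    exact aff_le_max p pL pU A B h1 h2
  · rcases le_total (-pL * A - (1 - pL) * B) (-pU * A - (1 - pU) * B) with h | h
    · rw [max_eq_right h]
      exact le_csSup hbdd ⟨pU, Set.right_mem_Icc.2 hLU, rfl⟩
    · rw [max_eq_left h]
      exact le_csSup hbdd ⟨pL, Set.left_mem_Icc.2 hLU, rfl⟩

lemma gibbs (p d : ℝ) (hp : 0 < p) (hp1 : p < 1) (hd : 0 < d) (hd1 : d < 1) :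
    -p * Real.log p - (1 - p) * Real.log (1 - p) ≤
      -p * Real.log d - (1 - p) * Real.log (1 - d) := by
  have h1 : Real.log (d / p) ≤ d / p - 1 := Real.log_le_sub_one_of_pos (div_pos hd hp)
  have h2 : Real.log ((1 - d) / (1 - p)) ≤ (1 - d) / (1 - p) - 1 :=
    Real.log_le_sub_one_of_pos (div_pos (by linarith) (by linarith))
  rw [Real.log_div (ne_of_gt hd) (ne_of_gt hp)] at h1
  rw [Real.log_div (by linarith) (by linarith)] at h2
  have hp' : p ≠ 0 := ne_of_gt hp
  have hq' : (1:ℝ) - p ≠ 0 := by linarith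
  have e1 : p * (d / p - 1) = d - p := by field_simp
  have e2 : (1 - p) * ((1 - d) / (1 - p) - 1) = p - d := by field_simp; ring
  nlinarith [mul_le_mul_of_nonneg_left h1 hp.le,
    mul_le_mul_of_nonneg_left h2 (by linarith : (0:ℝ) ≤ 1 - p)]

/-- the minimax forecast under log loss coincides with the minimax
forecast under quadratic loss. -/
theorem stmt_9 (pL pU : ℝ) (hpL : 0 ≤ pL) (hLU : pL ≤ pU) (hpU : pU ≤ 1)
    (hlt : pL < pU)
    (S : ℝ → ℝ)
    (hS : ∀ d, S d =
      sSup ((fun p => -p * Real.log d - (1 - p) * Real.log (1 - d)) '' Set.Icc pL pU)) :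
    (pU ≤ 1/2 → ∀ d ∈ Set.Ioo (0:ℝ) 1, S pU ≤ S d) ∧
    (1/2 ≤ pL → ∀ d ∈ Set.Ioo (0:ℝ) 1, S pL ≤ S d) ∧
    (pL < 1/2 → 1/2 < pU → ∀ d ∈ Set.Ioo (0:ℝ) 1, S (1/2) ≤ S d) := by
  have hSmax : ∀ d, S d = max (-pL * Real.log d - (1 - pL) * Real.log (1 - d))
      (-pU * Real.log d - (1 - pU) * Real.log (1 - d)) := fun d => by
    rw [hS d, sup_aff pL pU _ _ hLU]
  refine ⟨?_, ?_, ?_⟩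
  · intro hU2 d ⟨hd0, hd1⟩
    have hU0 : 0 < pU := lt_of_le_of_lt hpL hlt
    have hU1 : pU < 1 := by linarith
    have hA : Real.log pU ≤ Real.log (1 - pU) :=
      Real.log_le_log hU0 (by linarith)
    have hmax : S pU = -pU * Real.log pU - (1 - pU) * Real.log (1 - pU) := by
      rw [hSmax pU]
      exact max_eq_right (by nlinarith)
    rw [hmax, hSmax d]
    exact le_max_of_le_right (gibbs pU d hU0 hU1 hd0 hd1)
  · intro hL2 d ⟨hd0, hd1⟩
    have hL0 : 0 < pL := by linarith
    have hL1 : pL < 1 := lt_of_lt_of_le hlt hpU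
    have hA : Real.log (1 - pL) ≤ Real.log pL :=
      Real.log_le_log (by linarith) (by linarith)
    have hmax : S pL = -pL * Real.log pL - (1 - pL) * Real.log (1 - pL) := by
      rw [hSmax pL]
      exact max_eq_left (by nlinarith)
    rw [hmax, hSmax d]
    exact le_max_of_le_left (gibbs pL d hL0 hL1 hd0 hd1)
  · intro hL hU d ⟨hd0, hd1⟩
    have h12 : (1 - (1/2 : ℝ)) = 1/2 := by norm_num
    have hval : S (1/2) = -(1/2) * Real.log (1/2) - (1 - 1/2) * Real.log (1 - 1/2) := by
      rw [hSmax (1/2)]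
      rw [h12]
      ring_nf
      rw [max_self]
    rw [hval, hSmax d]
    calc -(1/2) * Real.log (1/2) - (1 - 1/2) * Real.log (1 - 1/2)
        ≤ -(1/2) * Real.log d - (1 - 1/2) * Real.log (1 - d) :=
          gibbs (1/2) d (by norm_num) (by norm_num) hd0 hd1
      _ ≤ _ := aff_le_max (1/2) pL pU _ _ hL.le hU.le
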